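/- If (a_n)_{n≥k} is an infinite sequence of non-negative integers with a_{n+1} ≤ a_n + 1 for all n and sup_n a_n finite, then: (1) there exist r ≥ s such that a_n = r and a_{n+1} = s for infinitely many n; and (2) for any m with s ≤ m < m+1 ≤ r, there are infinitely many n with a_n = m and a_{n+1} = m + 1. -/

import Mathlib

/-- A bounded rise-and-drop sequence of non-negative integers makes the same drop
`(r, s)` (with `s ≤ r`) infinitely often, and then rises past every step `(m, m+1)`
with `s ≤ m < m+1 ≤ r` infinitely often. -/
theorem stmt4 (a : ℕ → ℕ) (hrd : ∀ n, a (n + 1) ≤ a n + 1)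
    (M : ℕ) (hb : ∀ n, a n ≤ M) :
    ∃ r s, s ≤ r ∧ {n | a n = r ∧ a (n + 1) = s}.Infinite ∧
      ∀ m, s ≤ m → m + 1 ≤ r → {n | a n = m ∧ a (n + 1) = m + 1}.Infinite := by
  -- Step 1: drops happen infinitely often
  have hD : {n | a (n + 1) ≤ a n}.Infinite := by
    by_contra h
    rw [Set.not_infinite] at h
    obtain ⟨N, hN⟩ := h.bddAbove
    have key : ∀ k, a (N + 1) + k ≤ a (N + 1 + k) := by
      intro k
      induction k with
      | zero => simp
      | succ k ih =>
        have hnot : ¬ a (N + 1 + k + 1) ≤ a (N + 1 + k) := by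
          intro hle
          have := hN (show (N + 1 + k) ∈ {n | a (n + 1) ≤ a n} from hle)
          omega
        have heq : a (N + 1 + (k + 1)) = a (N + 1 + k + 1) := rfl
        omega
    have h1 := key (M + 1)
    have h2 := hb (N + 1 + (M + 1))
    omega
  -- Step 2: pigeonhole on pairs
  have hfin : (Set.Iic M ×ˢ Set.Iic M).Finite := (Set.finite_Iic M).prod (Set.finite_Iic M)
  have hpair : ∃ p ∈ Set.Iic M ×ˢ Set.Iic M,
      {n | a (n + 1) ≤ a n ∧ (a n, a (n + 1)) = p}.Infinite := by
    by_contra h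
    push_neg at h
    have hsub : {n | a (n + 1) ≤ a n} ⊆ ⋃ p ∈ Set.Iic M ×ˢ Set.Iic M,
        {n | a (n + 1) ≤ a n ∧ (a n, a (n + 1)) = p} := by
      intro n hn
      exact Set.mem_biUnion (Set.mk_mem_prod (hb n) (hb (n + 1))) ⟨hn, rfl⟩
    have hfin2 : (⋃ p ∈ Set.Iic M ×ˢ Set.Iic M,
        {n | a (n + 1) ≤ a n ∧ (a n, a (n + 1)) = p}).Finite :=
      hfin.biUnion (fun p hp => (h p hp))
    exact hD (hfin2.subset hsub)
  obtain ⟨⟨r, s⟩, _, hinf⟩ := hpair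
  obtain ⟨n₀, hn₀⟩ := hinf.nonempty
  obtain ⟨hn₀le, hn₀eq⟩ := hn₀
  have hsr : s ≤ r := by
    have h1 : a n₀ = r := congrArg Prod.fst hn₀eq
    have h2 : a (n₀ + 1) = s := congrArg Prod.snd hn₀eq
    omega
  have hS : {n | a n = r ∧ a (n + 1) = s}.Infinite := by
    refine hinf.mono ?_
    intro n ⟨_, heq⟩
    exact ⟨congrArg Prod.fst heq, congrArg Prod.snd heq⟩
  refine ⟨r, s, hsr, hS, ?_⟩
  -- Step 3: rises through each level m
  intro m hm1 hm2
  apply Set.infinite_of_forall_exists_gt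
  intro N
  obtain ⟨n, hnS, hn⟩ := hS.exists_gt N
  obtain ⟨n', hn'S, hn'⟩ := hS.exists_gt n
  obtain ⟨hnr, hns⟩ := hnS
  obtain ⟨hn'r, _⟩ := hn'S
  set F := (Finset.Icc (n + 1) n').filter (fun k => a k ≤ m) with hF
  have hmem : n + 1 ∈ F := by
    simp only [hF, Finset.mem_filter, Finset.mem_Icc]
    omega
  have hne : F.Nonempty := ⟨n + 1, hmem⟩
  set k := F.max' hne with hk
  have hkF : k ∈ F := F.max'_mem hne
  simp only [hF, Finset.mem_filter, Finset.mem_Icc] at hkF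
  obtain ⟨⟨hk1, hk2⟩, hk3⟩ := hkF
  have hkne : k ≠ n' := by
    intro heq
    rw [heq] at hk3
    omega
  have hk1' : ¬ a (k + 1) ≤ m := by
    intro hle
    have hmem' : k + 1 ∈ F := by
      simp only [hF, Finset.mem_filter, Finset.mem_Icc]
      omega
    have := F.le_max' (k + 1) hmem'
    omega
  have hrdk := hrd k
  refine ⟨k, ⟨by omega, by omega⟩, by omega⟩
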